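/- Let X be a CAT(0) cube complex and w a hyperplane. A hyperplane u belongs to I(w) (the intersection of all sets W_v over vertices v adjacent to w) if and only if u is transverse to w and to every other hyperplane transverse to w. Consequently, the elements of I(w) are pairwise transverse and #I(w) ≤ dim X. -/

import Mathlib

open SimpleGraph

variable {V : Type*}

/-- A median graph: combinatorial model of (the 1-skeleton of) a CAT(0) cube complex. -/
def IsMedianGraph (G : SimpleGraph V) : Prop :=
  G.Connected ∧ ∀ x y z : V, ∃! m : V,
    G.dist x m + G.dist m y = G.dist x y ∧
    G.dist x m + G.dist m z = G.dist x z ∧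
    G.dist y m + G.dist m z = G.dist y z

/-- Djoković–Winkler relation on oriented edges of a median graph; hyperplanes are its classes. -/
def Theta (G : SimpleGraph V) (e f : V × V) : Prop :=
  G.dist e.1 f.1 + G.dist e.2 f.2 ≠ G.dist e.1 f.2 + G.dist e.2 f.1

/-- A hyperplane, identified with the set of (oriented) edges crossing it. -/
def IsHyperplane (G : SimpleGraph V) (h : Set (V × V)) : Prop :=
  ∃ e : V × V, G.Adj e.1 e.2 ∧ h = {f | G.Adj f.1 f.2 ∧ Theta G e f}

/-- The hyperplane `h` is adjacent to the vertex `v` (i.e. `v` lies in the carrier of `h`). -/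
def AdjTo (G : SimpleGraph V) (h : Set (V × V)) (v : V) : Prop :=
  ∃ e ∈ h, e.1 = v ∨ e.2 = v

/-- `Wv G v`: the set of hyperplanes adjacent to `v`. -/
def Wv (G : SimpleGraph V) (v : V) : Set (Set (V × V)) :=
  {h | IsHyperplane G h ∧ AdjTo G h v}

/-- Two hyperplanes are in contact if their carriers share a vertex. -/
def Contact (G : SimpleGraph V) (h h' : Set (V × V)) : Prop :=
  ∃ v : V, AdjTo G h v ∧ AdjTo G h' v

/-- Two hyperplanes are transverse if they cross a common square. -/
def Transverse (G : SimpleGraph V) (h h' : Set (V × V)) : Prop :=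
  ∃ a b c d : V, (a, b) ∈ h ∧ (c, d) ∈ h ∧ (a, c) ∈ h' ∧ (b, d) ∈ h' ∧
    G.Adj a b ∧ G.Adj c d ∧ G.Adj a c ∧ G.Adj b d

/-- A clique in the contact graph: a set of hyperplanes whose carriers pairwise intersect. -/
def IsContactClique (G : SimpleGraph V) (C : Set (Set (V × V))) : Prop :=
  (∀ h ∈ C, IsHyperplane G h) ∧ ∀ h ∈ C, ∀ h' ∈ C, h ≠ h' → Contact G h h'

/-- A maximal clique in the contact graph. -/
def IsMaxContactClique (G : SimpleGraph V) (C : Set (Set (V × V))) : Prop :=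
  IsContactClique G C ∧ ∀ C', IsContactClique G C' → C ⊆ C' → C' = C

/-- The link of `v` is a cone, i.e. `v` is an extremal vertex. -/
def LinkIsCone (G : SimpleGraph V) (v : V) : Prop :=
  ∃ h ∈ Wv G v, ∀ h' ∈ Wv G v, h' ≠ h → Transverse G h h'

/-- Uniform local finiteness. -/
def UnifLocFinite (G : SimpleGraph V) : Prop :=
  ∃ N : ℕ, ∀ v : V, (G.neighborSet v).Finite ∧ (G.neighborSet v).ncard ≤ N

abbrev Hyp (G : SimpleGraph V) := {h : Set (V × V) // IsHyperplane G h}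

/-- The contact graph `𝒞(X)`. -/
def contactGraph (G : SimpleGraph V) : SimpleGraph (Hyp G) where
  Adj h h' := h ≠ h' ∧ Contact G h.1 h'.1
  symm := by
    refine ⟨?_⟩
    rintro h h' ⟨hne, v, hv, hv'⟩
    exact ⟨hne.symm, v, hv', hv⟩
  loopless := by refine ⟨?_⟩; rintro h ⟨hne, -⟩; exact hne rfl

/-- `Ical G w` = I(w): the hyperplanes whose carrier contains the carrier of `w`,
i.e. the intersection of the sets `Wv G v` over all vertices `v` adjacent to `w`. -/
def Ical (G : SimpleGraph V) (w : Set (V × V)) : Set (Set (V × V)) :=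
  {u | IsHyperplane G u ∧ ∀ v : V, AdjTo G w v → AdjTo G u v}

/-- `Ical0 G w` = I⁰(w): the hyperplanes with the same carrier as `w`. -/
def Ical0 (G : SimpleGraph V) (w : Set (V × V)) : Set (Set (V × V)) :=
  {u | u ∈ Ical G w ∧ w ∈ Ical G u}

/-- The action of a cubical automorphism on sets of edges (e.g. hyperplanes). -/
def hmap (G : SimpleGraph V) (φ : G ≃g G) (h : Set (V × V)) : Set (V × V) :=
  (fun e : V × V => (φ e.1, φ e.2)) '' h

/-- `π` is the vertex permutation induced by the contact-graph automorphism `ψ` via the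
correspondence between vertices and maximal cliques (`ρ(ψ) = π`). -/
def InducesPerm (G : SimpleGraph V) (ψ : contactGraph G ≃g contactGraph G)
    (π : Equiv.Perm V) : Prop :=
  ∀ (v : V) (h : Hyp G), h.1 ∈ Wv G v ↔ (ψ h).1 ∈ Wv G (π v)

/-- The hyperplane `u` is adjacent, inside the cube complex structure of a hyperplane `w`,
to the vertex of `w` given by the edge `e ∈ w`: `u` crosses a square containing `e`. -/
def HypAdjEdge (G : SimpleGraph V) (u : Set (V × V)) (e : V × V) : Prop :=
  ∃ c d : V, (e.1, c) ∈ u ∧ (e.2, d) ∈ u ∧ G.Adj c d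

/-- The link, in the cube complex structure of hyperplane `w`, of the vertex given by
`e ∈ w` is a cone (i.e. this vertex of `w` is extremal). -/
def HypLinkCone (G : SimpleGraph V) (w : Set (V × V)) (e : V × V) : Prop :=
  ∃ u, IsHyperplane G u ∧ u ≠ w ∧ HypAdjEdge G u e ∧
    ∀ u', IsHyperplane G u' → u' ≠ w → HypAdjEdge G u' e → u' ≠ u → Transverse G u u'

/-- No hyperplane of `X` has an extremal vertex. -/
def NoHypExtremalVertex (G : SimpleGraph V) : Prop :=
  ∀ w, IsHyperplane G w → ∀ e ∈ w, ¬ HypLinkCone G w e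

namespace MedianAux

variable {G : SimpleGraph V}

/-- `v` is on the `a`-side of the wall dual to the edge `(a,b)`. -/
def Sd (G : SimpleGraph V) (a b v : V) : Prop := G.dist v a + 1 = G.dist v b

def cls (G : SimpleGraph V) (a b : V) : Set (V × V) :=
  {f | G.Adj f.1 f.2 ∧ Theta G (a, b) f}

lemma med (hG : IsMedianGraph G) (x y z : V) : ∃ m,
    G.dist x m + G.dist m y = G.dist x y ∧ G.dist x m + G.dist m z = G.dist x z ∧
    G.dist y m + G.dist m z = G.dist y z := (hG.2 x y z).exists

lemma dist_adj {p q : V} (h : G.Adj p q) : G.dist p q = 1 :=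
  SimpleGraph.dist_eq_one_iff_adj.2 h

lemma eq_of_dist_eq_zero (hG : IsMedianGraph G) {p q : V} (h : G.dist p q = 0) : p = q :=
  (hG.1.dist_eq_zero_iff).1 h

lemma no_tie (hG : IsMedianGraph G) {p q : V} (h : G.Adj p q) (z : V) :
    G.dist p z ≠ G.dist q z := by
  obtain ⟨m, h1, h2, h3⟩ := med hG p q z
  rw [dist_adj h] at h1
  have : G.dist p m = 0 ∨ G.dist m q = 0 := by omega
  rcases this with h0 | h0
  · have hm := (eq_of_dist_eq_zero hG h0).symm; subst hm
    rw [dist_adj h.symm] at h3; omega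
  · have hm := eq_of_dist_eq_zero hG h0; subst hm
    rw [dist_adj h] at h2; omega

lemma dichot (hG : IsMedianGraph G) {a b : V} (hab : G.Adj a b) (v : V) :
    (G.dist v a + 1 = G.dist v b) ∨ (G.dist v b + 1 = G.dist v a) := by
  have h1 : G.dist v a ≤ G.dist v b + G.dist b a := hG.1.dist_triangle
  have h2 : G.dist v b ≤ G.dist v a + G.dist a b := hG.1.dist_triangle
  have h3 : G.dist a v ≠ G.dist b v := no_tie hG hab v
  rw [SimpleGraph.dist_comm (u:=a) (v:=v), SimpleGraph.dist_comm (u:=b) (v:=v)] at h3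
  rw [dist_adj hab] at h2
  rw [dist_adj hab.symm] at h1
  omega

lemma sd_not_sd (hG : IsMedianGraph G) {a b : V} (hab : G.Adj a b) (v : V) :
    ¬ Sd G a b v ↔ Sd G b a v := by
  have := dichot hG hab v
  unfold Sd
  omega

lemma theta_iff (hG : IsMedianGraph G) {a b : V} (hab : G.Adj a b) (p q : V) :
    Theta G (a, b) (p, q) ↔ ¬ (Sd G a b p ↔ Sd G a b q) := by
  have h1 := dichot hG hab p
  have h2 := dichot hG hab q
  unfold Theta Sd
  dsimp only
  rw [SimpleGraph.dist_comm (u:=a) (v:=p), SimpleGraph.dist_comm (u:=b) (v:=q),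
    SimpleGraph.dist_comm (u:=a) (v:=q), SimpleGraph.dist_comm (u:=b) (v:=p)]
  omega

lemma mem_cls (hG : IsMedianGraph G) {a b : V} (hab : G.Adj a b) {p q : V} :
    (p, q) ∈ cls G a b ↔ G.Adj p q ∧ ¬ (Sd G a b p ↔ Sd G a b q) := by
  unfold cls
  rw [Set.mem_setOf_eq, theta_iff hG hab]

lemma gen_mem (hG : IsMedianGraph G) {a b : V} (hab : G.Adj a b) : (a, b) ∈ cls G a b := by
  rw [mem_cls hG hab]
  refine ⟨hab, ?_⟩
  have ha : Sd G a b a := by unfold Sd; simp [dist_adj hab]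
  have hb : ¬ Sd G a b b := by
    unfold Sd; rw [SimpleGraph.dist_comm (u:=b) (v:=a), dist_adj hab, SimpleGraph.dist_self]; simp
  tauto

lemma mem_flip (hG : IsMedianGraph G) {a b : V} (hab : G.Adj a b) {p q : V}
    (h : (p, q) ∈ cls G a b) : (q, p) ∈ cls G a b := by
  rw [mem_cls hG hab] at h ⊢
  exact ⟨h.1.symm, by tauto⟩

lemma cls_flip (G : SimpleGraph V) (a b : V) : cls G a b = cls G b a := by
  unfold cls Theta
  ext f
  simp only [Set.mem_setOf_eq]
  constructor <;> exact fun h => ⟨h.1, by omega⟩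


lemma dist_pos_of_ne (hG : IsMedianGraph G) {p q : V} (h : p ≠ q) : G.dist p q ≠ 0 :=
  fun h0 => h (eq_of_dist_eq_zero hG h0)

/-- Convexity of halfspaces: no point of the `b`-side lies between two points of the
`a`-side. -/
lemma convex_side (hG : IsMedianGraph G) {a b : V} (hab : G.Adj a b) :
    ∀ (y x z : V), Sd G a b x → Sd G a b z → ¬ Sd G a b y →
      G.dist x y + G.dist y z ≠ G.dist x z := by
  suffices H : ∀ n k (y x z : V), G.dist y b = n → G.dist x y + G.dist z y = k →
      Sd G a b x → Sd G a b z → ¬ Sd G a b y →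
      G.dist x y + G.dist y z ≠ G.dist x z by
    intro y x z hx hz hy
    exact H _ _ y x z rfl rfl hx hz hy
  intro n
  induction n using Nat.strong_induction_on with
  | _ n ihn =>
  intro k
  induction k using Nat.strong_induction_on with
  | _ k ihk =>
  intro y x z hn hk hx hz hy hxyz
  have hy' : G.dist y b + 1 = G.dist y a := by
    have := dichot hG hab y; unfold Sd at hy; omega
  -- step 1 : the median of (x, y, b) must be y (and likewise for z)
  have key : ∀ p r : V, Sd G a b p → Sd G a b r →
      G.dist p y + G.dist y r = G.dist p r →
      G.dist p y + G.dist y b = G.dist p b := by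
    intro p r hp hr hpr
    obtain ⟨m, hm1, hm2, hm3⟩ := med hG p y b
    by_cases hmy : m = y
    · subst hmy; exact hm2
    · exfalso
      have hym : G.dist y m ≠ 0 := fun h0 => hmy (eq_of_dist_eq_zero hG h0).symm
      have hmb : G.dist m b < n := by omega
      have htr1 : G.dist p r ≤ G.dist p m + G.dist m r := hG.1.dist_triangle
      have htr2 : G.dist m r ≤ G.dist m y + G.dist y r := hG.1.dist_triangle
      have hcm : G.dist m y = G.dist y m := SimpleGraph.dist_comm
      have hbtw : G.dist p m + G.dist m r = G.dist p r := by omega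
      have hsm : Sd G a b m := by
        by_contra hsm
        exact ihn (G.dist m b) hmb (G.dist p m + G.dist r m) m p r rfl rfl hp hr hsm hbtw
      have htr3 : G.dist y a ≤ G.dist y m + G.dist m a := hG.1.dist_triangle
      unfold Sd at hsm
      omega
  have hxb : G.dist x y + G.dist y b = G.dist x b := key x z hx hz hxyz
  have hzb : G.dist z y + G.dist y b = G.dist z b := by
    refine key z x hz hx ?_
    rw [SimpleGraph.dist_comm (u:=z) (v:=y), SimpleGraph.dist_comm (u:=y) (v:=x),
      SimpleGraph.dist_comm (u:=z) (v:=x)]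
    omega
  -- step 2 : if x (or z) is far from y, pull it closer using the median with a
  have step2 : ∀ p r : V, Sd G a b p → Sd G a b r →
      G.dist p y + G.dist y r = G.dist p r → G.dist p y + G.dist y b = G.dist p b →
      2 ≤ G.dist p y →
      ∃ p' : V, Sd G a b p' ∧ G.dist p' y < G.dist p y ∧
        G.dist p' y + G.dist y r = G.dist p' r := by
    intro p r hp hr hpr hpb hp2
    obtain ⟨p', e1, e2, e3⟩ := med hG p y a
    have hsp' : Sd G a b p' := by
      by_contra hsp'
      have h1 : G.dist p' b + 1 = G.dist p' a := by
        have := dichot hG hab p'; unfold Sd at hsp'; omega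
      have htr : G.dist p b ≤ G.dist p p' + G.dist p' b := hG.1.dist_triangle
      unfold Sd at hp; omega
    have hp'p : p' ≠ p := by
      rintro rfl
      have hc1 : G.dist y p' = G.dist p' y := SimpleGraph.dist_comm
      unfold Sd at hp; omega
    have hpp' : G.dist p p' ≠ 0 := fun h0 => hp'p (eq_of_dist_eq_zero hG h0).symm
    refine ⟨p', hsp', by omega, ?_⟩
    have htr1 : G.dist p r ≤ G.dist p p' + G.dist p' r := hG.1.dist_triangle
    have htr2 : G.dist p' r ≤ G.dist p' y + G.dist y r := hG.1.dist_triangle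
    omega
  -- apply step 2 to shrink distances, via the inner induction
  by_cases hdx : 2 ≤ G.dist x y
  · obtain ⟨x', hs, hlt, hb⟩ := step2 x z hx hz hxyz hxb hdx
    exact ihk (G.dist x' y + G.dist z y) (by omega) y x' z hn rfl hs hz hy hb
  by_cases hdz : 2 ≤ G.dist z y
  · have hzyx : G.dist z y + G.dist y x = G.dist z x := by
      rw [SimpleGraph.dist_comm (u:=z) (v:=y), SimpleGraph.dist_comm (u:=y) (v:=x),
        SimpleGraph.dist_comm (u:=z) (v:=x)]
      omega
    obtain ⟨z', hs, hlt, hb⟩ := step2 z x hz hx hzyx hzb hdz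
    refine ihk (G.dist x y + G.dist z' y) (by omega) y x z' hn rfl hx hs hy ?_
    rw [SimpleGraph.dist_comm (u:=x) (v:=y), SimpleGraph.dist_comm (u:=y) (v:=z'),
      SimpleGraph.dist_comm (u:=x) (v:=z')]
    omega
  -- now x and z are neighbours of y
  have hxy1 : G.dist x y = 1 := by
    have : G.dist x y ≠ 0 := by
      intro h0
      have := eq_of_dist_eq_zero hG h0; subst this
      unfold Sd at hx; omega
    omega
  have hzy1 : G.dist z y = 1 := by
    have : G.dist z y ≠ 0 := by
      intro h0
      have := eq_of_dist_eq_zero hG h0; subst this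
      unfold Sd at hz; omega
    omega
  have hyz1 : G.dist y z = 1 := by rw [SimpleGraph.dist_comm (u:=y) (v:=z)]; exact hzy1
  have hxz2 : G.dist x z = 2 := by omega
  -- rule out n = 0
  have hn1 : 1 ≤ n := by
    rcases Nat.eq_zero_or_pos n with h0 | h1
    · exfalso
      have hyb : y = b := eq_of_dist_eq_zero hG (h0 ▸ hn)
      subst hyb
      have hxa : x = a := by
        apply eq_of_dist_eq_zero hG
        unfold Sd at hx; omega
      have hza : z = a := by
        apply eq_of_dist_eq_zero hG
        unfold Sd at hz; omega
      subst hxa; subst hza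
      simp [SimpleGraph.dist_self] at hxz2
    · exact h1
  -- the median q of (x, z, a)
  obtain ⟨q, f1, f2, f3⟩ := med hG x z a
  have hxa : G.dist x a = n := by unfold Sd at hx; omega
  have hza : G.dist z a = n := by unfold Sd at hz; omega
  have hcq : G.dist z q = G.dist q z := SimpleGraph.dist_comm
  have hqa : G.dist q a + 1 = n := by omega
  have hxq1 : G.dist x q = 1 := by
    have h1 : G.dist x q ≠ 0 := by
      intro h0; have := eq_of_dist_eq_zero hG h0; omega
    have h2 : G.dist q z ≠ 0 := by
      intro h0; have := eq_of_dist_eq_zero hG h0; subst this; omega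
    omega
  have hqz1 : G.dist q z = 1 := by omega
  have hqb : G.dist q b = n := by
    have htr : G.dist x b ≤ G.dist x q + G.dist q b := hG.1.dist_triangle
    have := dichot hG hab q
    omega
  -- y and q are both medians of (x, z, b) : contradiction with uniqueness
  have huniq := (hG.2 x z b).unique
    (y₁ := y) (y₂ := q)
    ⟨by omega, by omega, by omega⟩
    ⟨by omega, by omega, by omega⟩
  subst huniq
  omega


lemma side_between (hG : IsMedianGraph G) {a b : V} (hab : G.Adj a b) {x m z : V}
    (hbtw : G.dist x m + G.dist m z = G.dist x z) (hxz : Sd G a b x ↔ Sd G a b z) :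
    Sd G a b m ↔ Sd G a b x := by
  by_cases hx : Sd G a b x
  · have hz : Sd G a b z := hxz.1 hx
    have hm : Sd G a b m := by
      by_contra hm
      exact convex_side hG hab m x z hx hz hm hbtw
    tauto
  · have hz : ¬ Sd G a b z := fun h => hx (hxz.2 h)
    have hx' : Sd G b a x := (sd_not_sd hG hab x).1 hx
    have hz' : Sd G b a z := (sd_not_sd hG hab z).1 hz
    have hm : ¬ Sd G b a m → False := fun hm =>
      convex_side hG hab.symm m x z hx' hz' hm hbtw
    have hm' : Sd G b a m := by tauto
    have : ¬ Sd G a b m := (sd_not_sd hG hab m).2 hm'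
    tauto

lemma wall_det (hG : IsMedianGraph G) {a b p q : V} (hab : G.Adj a b)
    (hpq : (p, q) ∈ cls G a b) (hp : Sd G a b p) (v : V) :
    Sd G a b v ↔ Sd G p q v := by
  obtain ⟨hadj, hside⟩ := (mem_cls hG hab).1 hpq
  have hq : ¬ Sd G a b q := by tauto
  have hdpq : G.dist q p = 1 := dist_adj hadj.symm
  have hdpq' : G.dist p q = 1 := dist_adj hadj
  constructor
  · intro hv
    have hd := dichot hG hadj v
    unfold Sd
    rcases hd with h | h
    · exact h
    · exfalso
      exact convex_side hG hab q v p hv hp hq (by omega)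
  · intro hv
    unfold Sd at hv
    by_contra hnv
    have hv' : Sd G b a v := (sd_not_sd hG hab v).1 hnv
    have hq' : Sd G b a q := (sd_not_sd hG hab q).1 hq
    have hp' : ¬ Sd G b a p := fun h => ((sd_not_sd hG hab p).2 h) hp
    exact convex_side hG hab.symm p v q hv' hq' hp' (by omega)

lemma cls_eq (hG : IsMedianGraph G) {a b p q : V} (hab : G.Adj a b)
    (hpq : (p, q) ∈ cls G a b) : cls G a b = cls G p q := by
  have hadj : G.Adj p q := ((mem_cls hG hab).1 hpq).1
  have main : ∀ a' b' p' q' : V, G.Adj a' b' → (p', q') ∈ cls G a' b' →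
      Sd G a' b' p' → cls G a' b' = cls G p' q' := by
    intro a' b' p' q' hab' hpq' hp'
    ext ⟨r, s⟩
    rw [mem_cls hG hab', mem_cls hG (((mem_cls hG hab').1 hpq').1),
      wall_det hG hab' hpq' hp' r, wall_det hG hab' hpq' hp' s]
  by_cases hp : Sd G a b p
  · exact main a b p q hab hpq hp
  · have hq : Sd G a b q := by
      have := ((mem_cls hG hab).1 hpq).2; tauto
    rw [main a b q p hab (mem_flip hG hab hpq) hq, cls_flip]

lemma cls_disj (hG : IsMedianGraph G) {a b c d p q : V} (hab : G.Adj a b) (hcd : G.Adj c d)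
    (hne : cls G a b ≠ cls G c d) (h : (p, q) ∈ cls G a b) : (p, q) ∉ cls G c d :=
  fun h2 => hne ((cls_eq hG hab h).trans (cls_eq hG hcd h2).symm)

lemma adjTo_iff (hG : IsMedianGraph G) {a b v : V} (hab : G.Adj a b) :
    AdjTo G (cls G a b) v ↔ ∃ v', (v, v') ∈ cls G a b := by
  constructor
  · rintro ⟨⟨r, s⟩, hmem, h | h⟩
    · cases h; exact ⟨s, hmem⟩
    · cases h; exact ⟨r, mem_flip hG hab hmem⟩
  · rintro ⟨v', h⟩; exact ⟨(v, v'), h, Or.inl rfl⟩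

lemma wall_dist (hG : IsMedianGraph G) {a b v v₁ : V} (hab : G.Adj a b)
    (hv1 : (v, v₁) ∈ cls G a b) (t : V) :
    ((Sd G a b t ↔ Sd G a b v) → G.dist t v + 1 = G.dist t v₁) ∧
    (¬ (Sd G a b t ↔ Sd G a b v) → G.dist t v₁ + 1 = G.dist t v) := by
  obtain ⟨hadj, hside⟩ := (mem_cls hG hab).1 hv1
  have hd := dichot hG hadj t
  by_cases hv : Sd G a b v
  · have hw : Sd G a b t ↔ (G.dist t v + 1 = G.dist t v₁) := wall_det hG hab hv1 hv t
    constructor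
    · intro h; exact hw.1 (h.2 hv)
    · intro h
      have ht : ¬ Sd G a b t := by tauto
      have h2 : ¬ (G.dist t v + 1 = G.dist t v₁) := fun hh => ht (hw.2 hh)
      omega
  · have hv₁ : Sd G a b v₁ := by tauto
    have hw : Sd G a b t ↔ (G.dist t v₁ + 1 = G.dist t v) :=
      wall_det hG hab (mem_flip hG hab hv1) hv₁ t
    constructor
    · intro h
      have ht : ¬ Sd G a b t := by tauto
      have h2 : ¬ (G.dist t v₁ + 1 = G.dist t v) := fun hh => ht (hw.2 hh)
      omega
    · intro h
      have ht : Sd G a b t := by tauto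
      exact hw.1 ht


lemma adj_of_dist_one {p q : V} (h : G.dist p q = 1) : G.Adj p q :=
  SimpleGraph.dist_eq_one_iff_adj.1 h

lemma carrier_convex_core (hG : IsMedianGraph G) {a b v v₁ x x₁ m : V} (hab : G.Adj a b)
    (hv1 : (v, v₁) ∈ cls G a b) (hx1 : (x, x₁) ∈ cls G a b)
    (hvm : Sd G a b v ↔ Sd G a b m) (hxm : Sd G a b x ↔ Sd G a b m)
    (hbtw : G.dist v m + G.dist m x = G.dist v x) :
    AdjTo G (cls G a b) m := by
  have hsv := ((mem_cls hG hab).1 hv1).2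
  have hsx := ((mem_cls hG hab).1 hx1).2
  have e1 : G.dist m v + 1 = G.dist m v₁ := (wall_dist hG hab hv1 m).1 (by tauto)
  have e2 : G.dist m x + 1 = G.dist m x₁ := (wall_dist hG hab hx1 m).1 (by tauto)
  have e3 : G.dist x v + 1 = G.dist x v₁ := (wall_dist hG hab hv1 x).1 (by tauto)
  have e4 : G.dist v₁ x₁ + 1 = G.dist v₁ x := (wall_dist hG hab hx1 v₁).2 (by tauto)
  obtain ⟨μ, g1, g2, g3⟩ := med hG m v₁ x₁
  have c1 : G.dist v₁ μ = G.dist μ v₁ := SimpleGraph.dist_comm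
  have c2 : G.dist m v = G.dist v m := SimpleGraph.dist_comm
  have c3 : G.dist m x = G.dist x m := SimpleGraph.dist_comm
  have c4 : G.dist x v = G.dist v x := SimpleGraph.dist_comm
  have c5 : G.dist v₁ x = G.dist x v₁ := SimpleGraph.dist_comm
  have hdμ : G.dist m μ = 1 := by omega
  have hμside : Sd G a b μ ↔ Sd G a b v₁ :=
    side_between hG hab (by omega : G.dist v₁ μ + G.dist μ x₁ = G.dist v₁ x₁) (by tauto)
  have hadj : G.Adj m μ := adj_of_dist_one hdμ
  have hmem : (m, μ) ∈ cls G a b := (mem_cls hG hab).2 ⟨hadj, by tauto⟩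
  exact ⟨(m, μ), hmem, Or.inl rfl⟩

lemma carrier_convex (hG : IsMedianGraph G) {a b v x m : V} (hab : G.Adj a b)
    (hv : AdjTo G (cls G a b) v) (hx : AdjTo G (cls G a b) x)
    (hbtw : G.dist v m + G.dist m x = G.dist v x) :
    AdjTo G (cls G a b) m := by
  obtain ⟨v₁, hv1⟩ := (adjTo_iff hG hab).1 hv
  obtain ⟨x₁, hx1⟩ := (adjTo_iff hG hab).1 hx
  have hsv := ((mem_cls hG hab).1 hv1).2
  have hsx := ((mem_cls hG hab).1 hx1).2
  by_cases hvm : Sd G a b v ↔ Sd G a b m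
  · by_cases hxm : Sd G a b x ↔ Sd G a b m
    · exact carrier_convex_core hG hab hv1 hx1 hvm hxm hbtw
    · have e : G.dist m x₁ + 1 = G.dist m x := (wall_dist hG hab hx1 m).2 (by tauto)
      have e' : G.dist v x₁ + 1 = G.dist v x := (wall_dist hG hab hx1 v).2 (by tauto)
      have hx₁m : Sd G a b x₁ ↔ Sd G a b m := by tauto
      exact carrier_convex_core hG hab hv1 (mem_flip hG hab hx1) hvm hx₁m (by omega)
  · by_cases hxm : Sd G a b x ↔ Sd G a b m
    · have e : G.dist m v₁ + 1 = G.dist m v := (wall_dist hG hab hv1 m).2 (by tauto)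
      have e' : G.dist x v₁ + 1 = G.dist x v := (wall_dist hG hab hv1 x).2 (by tauto)
      have c2 : G.dist m v = G.dist v m := SimpleGraph.dist_comm
      have c2' : G.dist m v₁ = G.dist v₁ m := SimpleGraph.dist_comm
      have c4 : G.dist x v = G.dist v x := SimpleGraph.dist_comm
      have c5 : G.dist x v₁ = G.dist v₁ x := SimpleGraph.dist_comm
      have hv₁m : Sd G a b v₁ ↔ Sd G a b m := by tauto
      exact carrier_convex_core hG hab (mem_flip hG hab hv1) hx1 hv₁m hxm (by omega)
    · exfalso
      have : Sd G a b m ↔ Sd G a b v := side_between hG hab hbtw (by tauto)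
      tauto

lemma nn_iff {P Q R : Prop} (h1 : ¬ (P ↔ Q)) (h2 : ¬ (P ↔ R)) : Q ↔ R := by tauto
lemma pn_iff {P Q R : Prop} (h1 : P ↔ Q) (h2 : ¬ (P ↔ R)) : ¬ (Q ↔ R) := by tauto

lemma fourth_corner(hG : IsMedianGraph G) {a b c d x x' y z₀ : V}
    (hab : G.Adj a b) (hcd : G.Adj c d) (hne : cls G a b ≠ cls G c d)
    (hu : (x, x') ∈ cls G a b) (ht : (x, y) ∈ cls G c d)
    (h1 : ¬ (Sd G a b z₀ ↔ Sd G a b x)) (h2 : ¬ (Sd G c d z₀ ↔ Sd G c d x)) :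
    ∃ m, (y, m) ∈ cls G a b ∧ (x', m) ∈ cls G c d := by
  have hxx' : G.Adj x x' := ((mem_cls hG hab).1 hu).1
  have hxy : G.Adj x y := ((mem_cls hG hcd).1 ht).1
  have hsu : ¬ (Sd G a b x ↔ Sd G a b x') := ((mem_cls hG hab).1 hu).2
  have hst : ¬ (Sd G c d x ↔ Sd G c d y) := ((mem_cls hG hcd).1 ht).2
  have hd1 : (x, x') ∉ cls G c d := cls_disj hG hab hcd hne hu
  have hd2 : (x, y) ∉ cls G a b := fun hmem =>
    cls_disj hG hcd hab (Ne.symm hne) ht hmem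
  have htu : Sd G c d x ↔ Sd G c d x' := by
    by_contra hcon
    exact hd1 ((mem_cls hG hcd).2 ⟨hxx', hcon⟩)
  have hsy : Sd G a b x ↔ Sd G a b y := by
    by_contra hcon
    exact hd2 ((mem_cls hG hab).2 ⟨hxy, hcon⟩)
  have hx'y : x' ≠ y := by
    intro hh; subst hh; exact hsu hsy
  have hnadj : ¬ G.Adj x' y := by
    intro hadj
    have hm1 : (x', y) ∈ cls G a b :=
      (mem_cls hG hab).2 ⟨hadj, fun hiff => hsu (hsy.trans hiff.symm)⟩
    have hm2 : (x', y) ∈ cls G c d :=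
      (mem_cls hG hcd).2 ⟨hadj, fun hiff => hst (htu.trans hiff)⟩
    exact cls_disj hG hab hcd hne hm1 hm2
  have hdx'y : G.dist x' y = 2 := by
    have htr : G.dist x' y ≤ G.dist x' x + G.dist x y := hG.1.dist_triangle
    have d1 : G.dist x' x = 1 := dist_adj hxx'.symm
    have d2 : G.dist x y = 1 := dist_adj hxy
    have hne0 : G.dist x' y ≠ 0 := dist_pos_of_ne hG hx'y
    have hne1 : G.dist x' y ≠ 1 := fun hh => hnadj (adj_of_dist_one hh)
    omega
  obtain ⟨m, g1, g2, g3⟩ := med hG x' y z₀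
  have hμ1 : Sd G a b m ↔ Sd G a b x' :=
    side_between hG hab g2 (nn_iff hsu (fun c => h1 c.symm))
  have hμ2 : Sd G c d m ↔ Sd G c d y :=
    side_between hG hcd g3 (nn_iff hst (fun c => h2 c.symm))
  have hmy : m ≠ y := by
    intro hh; subst hh; exact hsu (hsy.trans hμ1)
  have hmx' : m ≠ x' := by
    intro hh; subst hh; exact hst (htu.trans hμ2)
  have hd1' : G.dist x' m = 1 := by
    have u1 : G.dist x' m ≠ 0 := fun hh => hmx' (eq_of_dist_eq_zero hG hh).symm
    have u2 : G.dist m y ≠ 0 := fun hh => hmy (eq_of_dist_eq_zero hG hh)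
    omega
  have hd2' : G.dist m y = 1 := by omega
  have hadjym : G.Adj y m := (adj_of_dist_one hd2').symm
  have hadjx'm : G.Adj x' m := adj_of_dist_one hd1'
  refine ⟨m, (mem_cls hG hab).2 ⟨hadjym, fun c => hsu (hsy.trans (c.trans hμ1))⟩,
    (mem_cls hG hcd).2 ⟨hadjx'm, fun c => hst (htu.trans (c.trans hμ2))⟩⟩


lemma transverse_symm {h h' : Set (V × V)} (ht : Transverse G h h') : Transverse G h' h := by
  obtain ⟨A, B, C, D, h1, h2, h3, h4, a1, a2, a3, a4⟩ := ht
  exact ⟨A, C, B, D, h3, h4, h1, h2, a3, a4, a1, a2⟩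

lemma hyp_repr {h : Set (V × V)} (hh : IsHyperplane G h) :
    ∃ a b : V, G.Adj a b ∧ h = cls G a b := by
  obtain ⟨⟨a, b⟩, hadj, rfl⟩ := hh
  exact ⟨a, b, hadj, rfl⟩

lemma cls_hyp {a b : V} (hab : G.Adj a b) : IsHyperplane G (cls G a b) :=
  ⟨(a, b), hab, rfl⟩

lemma transverse_of_carrier (hG : IsMedianGraph G) {a b c d p q : V}
    (hab : G.Adj a b) (hcd : G.Adj c d) (hne : cls G a b ≠ cls G c d)
    (hpq : (p, q) ∈ cls G c d)
    (hp : AdjTo G (cls G a b) p) (hq : AdjTo G (cls G a b) q) :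
    Transverse G (cls G a b) (cls G c d) := by
  obtain ⟨p', hp'⟩ := (adjTo_iff hG hab).1 hp
  obtain ⟨q', hq'⟩ := (adjTo_iff hG hab).1 hq
  have hadjpq : G.Adj p q := ((mem_cls hG hcd).1 hpq).1
  have hsu : ¬ (Sd G a b p ↔ Sd G a b p') := ((mem_cls hG hab).1 hp').2
  have hsq : ¬ (Sd G a b q ↔ Sd G a b q') := ((mem_cls hG hab).1 hq').2
  have htpq : ¬ (Sd G c d p ↔ Sd G c d q) := ((mem_cls hG hcd).1 hpq).2
  have hnd : (p, q) ∉ cls G a b := cls_disj hG hcd hab (Ne.symm hne) hpq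
  have hspq : Sd G a b p ↔ Sd G a b q := by
    by_contra hcon
    exact hnd ((mem_cls hG hab).2 ⟨hadjpq, hcon⟩)
  have hnd2 : (q, q') ∉ cls G c d := cls_disj hG hab hcd hne hq'
  have htq' : Sd G c d q ↔ Sd G c d q' := by
    by_contra hcon
    exact hnd2 ((mem_cls hG hcd).2 ⟨((mem_cls hG hab).1 hq').1, hcon⟩)
  have h1 : ¬ (Sd G a b q' ↔ Sd G a b p) := fun cc => hsq (hspq.symm.trans cc.symm)
  have h2 : ¬ (Sd G c d q' ↔ Sd G c d p) := fun cc => htpq ((htq'.trans cc).symm)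
  obtain ⟨m, hqm, hp'm⟩ := fourth_corner hG hab hcd hne hp' hpq h1 h2
  exact ⟨p, p', q, m, hp', hqm, hpq, hp'm, ((mem_cls hG hab).1 hp').1,
    ((mem_cls hG hab).1 hqm).1, hadjpq, ((mem_cls hG hcd).1 hp'm).1⟩

lemma step_of_transverse (hG : IsMedianGraph G) {a b c d x x' y : V}
    (hab : G.Adj a b) (hcd : G.Adj c d) (hne : cls G a b ≠ cls G c d)
    (htv : Transverse G (cls G a b) (cls G c d))
    (hu : (x, x') ∈ cls G a b) (ht : (x, y) ∈ cls G c d) :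
    AdjTo G (cls G a b) y := by
  obtain ⟨A, B, C, D, h1, h2, h3, h4, a1, a2, a3, a4⟩ := htv
  have sAB : ¬ (Sd G a b A ↔ Sd G a b B) := ((mem_cls hG hab).1 h1).2
  have sCD : ¬ (Sd G a b C ↔ Sd G a b D) := ((mem_cls hG hab).1 h2).2
  have tAC : ¬ (Sd G c d A ↔ Sd G c d C) := ((mem_cls hG hcd).1 h3).2
  have tBD : ¬ (Sd G c d B ↔ Sd G c d D) := ((mem_cls hG hcd).1 h4).2
  have sAC : Sd G a b A ↔ Sd G a b C := by
    by_contra hcon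
    exact cls_disj hG hcd hab (Ne.symm hne) h3 ((mem_cls hG hab).2 ⟨a3, hcon⟩)
  have sBD : Sd G a b B ↔ Sd G a b D := by
    by_contra hcon
    exact cls_disj hG hcd hab (Ne.symm hne) h4 ((mem_cls hG hab).2 ⟨a4, hcon⟩)
  have tAB : Sd G c d A ↔ Sd G c d B := by
    by_contra hcon
    exact cls_disj hG hab hcd hne h1 ((mem_cls hG hcd).2 ⟨a1, hcon⟩)
  have tCD : Sd G c d C ↔ Sd G c d D := by
    by_contra hcon
    exact cls_disj hG hab hcd hne h2 ((mem_cls hG hcd).2 ⟨a2, hcon⟩)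
  have hz : ∃ z₀, ¬ (Sd G a b z₀ ↔ Sd G a b x) ∧ ¬ (Sd G c d z₀ ↔ Sd G c d x) := by
    by_cases e1 : Sd G a b A ↔ Sd G a b x
    · by_cases e2 : Sd G c d A ↔ Sd G c d x
      · exact ⟨D, fun cc => sAB (e1.trans (cc.symm.trans sBD.symm)),
          fun cc => tAC (e2.trans (cc.symm.trans tCD.symm))⟩
      · exact ⟨B, fun cc => sAB (e1.trans cc.symm),
          fun cc => e2 (tAB.trans cc)⟩
    · by_cases e2 : Sd G c d A ↔ Sd G c d x
      · exact ⟨C, fun cc => e1 (sAC.trans cc),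
          fun cc => tAC (e2.trans cc.symm)⟩
      · exact ⟨A, e1, e2⟩
  obtain ⟨z₀, hz1, hz2⟩ := hz
  obtain ⟨m, hym, -⟩ := fourth_corner hG hab hcd hne hu ht hz1 hz2
  exact ⟨(y, m), hym, Or.inl rfl⟩

lemma carrier_subset (hG : IsMedianGraph G) {a b c d : V}
    (hab : G.Adj a b) (hcd : G.Adj c d) (hne : cls G a b ≠ cls G c d)
    (htv : Transverse G (cls G a b) (cls G c d))
    (hH : ∀ t : Set (V × V), IsHyperplane G t → t ≠ cls G a b →
      Transverse G t (cls G c d) → Transverse G (cls G a b) t) :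
    ∀ v, AdjTo G (cls G c d) v → AdjTo G (cls G a b) v := by
  obtain ⟨A, B, C, D, h1, h2, h3, h4, a1, a2, a3, a4⟩ := htv
  have htv' : Transverse G (cls G a b) (cls G c d) :=
    ⟨A, B, C, D, h1, h2, h3, h4, a1, a2, a3, a4⟩
  have hbase_u : AdjTo G (cls G a b) A := ⟨(A, B), h1, Or.inl rfl⟩
  have hbase_w : AdjTo G (cls G c d) A := ⟨(A, C), h3, Or.inl rfl⟩
  -- one step along the carrier of `cls c d`
  have step : ∀ y z, AdjTo G (cls G a b) y → AdjTo G (cls G c d) y →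
      AdjTo G (cls G c d) z → G.Adj y z → AdjTo G (cls G a b) z := by
    intro y z hy hwy hwz hadj
    have htmem : (y, z) ∈ cls G y z := gen_mem hG hadj
    obtain ⟨y', hy'⟩ := (adjTo_iff hG hab).1 hy
    by_cases hc1 : cls G y z = cls G a b
    · exact ⟨(y, z), hc1 ▸ htmem, Or.inr rfl⟩
    by_cases hc2 : cls G y z = cls G c d
    · exact step_of_transverse hG hab hcd hne htv' hy' (hc2 ▸ htmem)
    · have htw : Transverse G (cls G c d) (cls G y z) :=
        transverse_of_carrier hG hcd hadj (fun hh => hc2 hh.symm) htmem hwy hwz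
      have h3' : Transverse G (cls G a b) (cls G y z) :=
        hH (cls G y z) (cls_hyp hadj) hc1 (transverse_symm htw)
      exact step_of_transverse hG hab hadj (fun hh => hc1 hh.symm) h3' hy' htmem
  suffices H : ∀ k v, G.dist v A = k → AdjTo G (cls G c d) v → AdjTo G (cls G a b) v by
    intro v hv
    exact H (G.dist v A) v rfl hv
  intro k
  induction k using Nat.strong_induction_on with
  | _ k ih =>
  intro v hk hv
  rcases Nat.eq_zero_or_pos k with h0 | hpos
  · subst h0
    have : v = A := eq_of_dist_eq_zero hG hk
    subst this
    exact hbase_u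
  · have hne0 : G.dist v A ≠ 0 := by omega
    obtain ⟨p, hp⟩ := SimpleGraph.exists_walk_of_dist_ne_zero hne0
    cases p with
    | nil => simp [SimpleGraph.dist_self] at hne0
    | @cons _ w₀ _ hadj q =>
      have hq : q.length = k - 1 := by
        simp only [SimpleGraph.Walk.length_cons] at hp
        omega
      have hd1 : G.dist w₀ A ≤ k - 1 := hq ▸ SimpleGraph.dist_le q
      have hd2 : G.dist v A ≤ 1 + G.dist w₀ A := by
        have htr : G.dist v A ≤ G.dist v w₀ + G.dist w₀ A := hG.1.dist_triangle
        have : G.dist v w₀ = 1 := dist_adj hadj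
        omega
      have hd3 : G.dist w₀ A = k - 1 := by omega
      have hbtw : G.dist v w₀ + G.dist w₀ A = G.dist v A := by
        have : G.dist v w₀ = 1 := dist_adj hadj
        omega
      have hw₀ : AdjTo G (cls G c d) w₀ := carrier_convex hG hcd hv hbase_w hbtw
      have hu₀ : AdjTo G (cls G a b) w₀ := ih (k - 1) (by omega) w₀ hd3 hw₀
      exact step w₀ v hu₀ hw₀ hv hadj.symm

end MedianAux

/-- `u ∈ I(w)` iff `u` is transverse to `w` and to every other hyperplane
transverse to `w`; consequently the elements of `I(w)` are pairwise transverse and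
`#I(w) ≤ dim X`. -/


theorem Ical_characterization (G : SimpleGraph V) (hG : IsMedianGraph G) (n : ℕ)
    (hdim : ∀ S : Finset (Set (V × V)), (∀ h ∈ S, IsHyperplane G h) →
      (S : Set (Set (V × V))).Pairwise (Transverse G) → S.card ≤ n)
    (w : Set (V × V)) (hw : IsHyperplane G w) :
    (∀ u : Set (V × V), u ≠ w →
      (u ∈ Ical G w ↔ IsHyperplane G u ∧ Transverse G u w ∧
        ∀ t, IsHyperplane G t → t ≠ u → Transverse G t w → Transverse G u t)) ∧
    (Ical G w).Pairwise (Transverse G) ∧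
    (Ical G w).Finite ∧ (Ical G w).ncard ≤ n := by
  classical
  obtain ⟨c, d, hcd, rfl⟩ := MedianAux.hyp_repr hw
  have part1 : ∀ u : Set (V × V), u ≠ MedianAux.cls G c d →
      (u ∈ Ical G (MedianAux.cls G c d) ↔ IsHyperplane G u ∧
        Transverse G u (MedianAux.cls G c d) ∧
        ∀ t, IsHyperplane G t → t ≠ u → Transverse G t (MedianAux.cls G c d) →
          Transverse G u t) := by
    intro u hune
    constructor
    · rintro ⟨hhu, hcar⟩
      obtain ⟨a, b, hab, rfl⟩ := MedianAux.hyp_repr hhu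
      refine ⟨MedianAux.cls_hyp hab, ?_, ?_⟩
      · exact MedianAux.transverse_of_carrier hG hab hcd hune (MedianAux.gen_mem hG hcd)
          (hcar c ⟨(c, d), MedianAux.gen_mem hG hcd, Or.inl rfl⟩)
          (hcar d ⟨(c, d), MedianAux.gen_mem hG hcd, Or.inr rfl⟩)
      · intro t hht htne httv
        obtain ⟨e, f, hef, rfl⟩ := MedianAux.hyp_repr hht
        obtain ⟨A, B, C, D, k1, k2, k3, k4, b1, b2, b3, b4⟩ := httv
        exact MedianAux.transverse_of_carrier hG hab hef (Ne.symm htne) k1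
          (hcar A ⟨(A, C), k3, Or.inl rfl⟩) (hcar B ⟨(B, D), k4, Or.inl rfl⟩)
    · rintro ⟨hhu, htv, hall⟩
      obtain ⟨a, b, hab, hueq⟩ := MedianAux.hyp_repr hhu
      subst hueq
      exact ⟨MedianAux.cls_hyp hab,
        MedianAux.carrier_subset hG hab hcd hune htv
          (fun t hht htne httv => hall t hht htne httv)⟩
  have part2 : (Ical G (MedianAux.cls G c d)).Pairwise (Transverse G) := by
    intro u hu u' hu' hne'
    by_cases h1 : u = MedianAux.cls G c d
    · subst h1
      have h2 : u' ≠ MedianAux.cls G c d := fun hh => hne' hh.symm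
      obtain ⟨-, htv, -⟩ := (part1 u' h2).1 hu'
      exact MedianAux.transverse_symm htv
    · by_cases h2 : u' = MedianAux.cls G c d
      · subst h2
        obtain ⟨-, htv, -⟩ := (part1 u h1).1 hu
        exact htv
      · obtain ⟨-, htv', -⟩ := (part1 u' h2).1 hu'
        obtain ⟨-, -, hall⟩ := (part1 u h1).1 hu
        exact hall u' hu'.1 (Ne.symm hne') htv'
  have hfin : (Ical G (MedianAux.cls G c d)).Finite := by
    by_contra hinf
    obtain ⟨T, hTsub, hTcard⟩ := Set.Infinite.exists_subset_card_eq hinf (n + 1)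
    have hle := hdim T (fun h hh => (hTsub hh).1) (part2.mono hTsub)
    omega
  have hcard : (Ical G (MedianAux.cls G c d)).ncard ≤ n := by
    have hle := hdim hfin.toFinset (fun h hh => (hfin.mem_toFinset.1 hh).1)
      (by rw [Set.Finite.coe_toFinset]; exact part2)
    rw [Set.ncard_eq_toFinset_card _ hfin]
    exact hle
  exact ⟨part1, part2, hfin, hcard⟩
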